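/- Let R be a strongly ℤ-graded ring with grading 𝒜, and let a ≤ b be integers. Then the additive subgroup ⨆_{a ≤ n ≤ b} 𝒜 n of R, regarded as a left module over the subring 𝒜 0 via multiplication, is finitely generated and projective. -/

import Mathlib

/-- A ℤ-graded ring is *strongly graded* if `𝒜 i * 𝒜 j = 𝒜 (i + j)` for all `i j`. -/
def IsStronglyGraded {R : Type*} [Ring R] (𝒜 : ℤ → Submodule ℤ R) : Prop :=
  ∀ i j : ℤ, 𝒜 i * 𝒜 j = 𝒜 (i + j)

variable {R : Type*} [Ring R] (𝒜 : ℤ → Submodule ℤ R) [GradedRing 𝒜]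

theorem grade_zero_mul_Icc (a b : ℤ) :
    (𝒜 0) * (⨆ n ∈ Set.Icc a b, 𝒜 n) ≤ ⨆ n ∈ Set.Icc a b, 𝒜 n := by
  rw [Submodule.mul_iSup]
  refine iSup_le fun n => ?_
  rw [Submodule.mul_iSup]
  refine iSup_le fun hn => ?_
  refine le_trans (Submodule.mul_le.2 fun x hx y hy => by
    simpa using SetLike.mul_mem_graded hx hy) ?_
  exact le_iSup₂_of_le n hn le_rfl

/-- `⨆_{a ≤ n ≤ b} 𝒜 n` is a left module over the subring `𝒜 0`, the action
being multiplication in `R`. -/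
instance IccGradeZeroModule (a b : ℤ) : Module (𝒜 0) ↥(⨆ n ∈ Set.Icc a b, 𝒜 n) where
  smul c x := ⟨(c : R) * x, grade_zero_mul_Icc 𝒜 a b (Submodule.mul_mem_mul c.2 x.2)⟩
  one_smul x := Subtype.ext (one_mul _)
  mul_smul a b x := Subtype.ext (mul_assoc _ _ _)
  smul_zero a := Subtype.ext (mul_zero _)
  smul_add a x y := Subtype.ext (mul_add _ _ _)
  add_smul a b x := Subtype.ext (add_mul _ _ _)
  zero_smul x := Subtype.ext (zero_mul _)

/-- If `R` is strongly ℤ-graded and `a ≤ b`, then `⨆_{a ≤ n ≤ b} 𝒜 n` is a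
finitely generated projective left `𝒜 0`-module. -/
theorem Icc_finite_projective (h : IsStronglyGraded 𝒜) (a b : ℤ) (hab : a ≤ b) :
    Module.Finite (𝒜 0) ↥(⨆ n ∈ Set.Icc a b, 𝒜 n) ∧
    Module.Projective (𝒜 0) ↥(⨆ n ∈ Set.Icc a b, 𝒜 n) := by
  classical
  -- For each `n`, write `1` as a finite sum `∑ yᵢ * xᵢ` with `yᵢ ∈ 𝒜 (-n)`, `xᵢ ∈ 𝒜 n`.
  have key : ∀ n : ℤ, ∃ (k : ℕ) (y : Fin k → (𝒜 (-n))) (x : Fin k → (𝒜 n)),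
      (∑ i, (y i : R) * (x i : R)) = 1 := by
    intro n
    have h1 : (1 : R) ∈ 𝒜 (-n) * 𝒜 n := by
      rw [h (-n) n, neg_add_cancel]
      exact SetLike.GradedOne.one_mem
    refine Submodule.mul_induction_on h1 ?_ ?_
    · intro u hu v hv
      exact ⟨1, fun _ => ⟨u, hu⟩, fun _ => ⟨v, hv⟩, by simp⟩
    · rintro r s ⟨k1, y1, x1, h1'⟩ ⟨k2, y2, x2, h2'⟩
      refine ⟨k1 + k2, Fin.append y1 y2, Fin.append x1 x2, ?_⟩
      rw [Fin.sum_univ_add]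
      simp [Fin.append_left, Fin.append_right, h1', h2']
  choose k y x hk using key
  set M : Submodule ℤ R := ⨆ n ∈ Set.Icc a b, 𝒜 n with hMdef
  have hle : ∀ n : ↥(Set.Icc a b), 𝒜 (n : ℤ) ≤ M := fun n =>
    le_iSup₂_of_le (n : ℤ) n.2 le_rfl
  let ι := Σ n : ↥(Set.Icc a b), Fin (k (n : ℤ))
  let xM : ι → M := fun p => ⟨(x (p.1 : ℤ) p.2 : R), hle p.1 (x _ p.2).2⟩
  -- the two splitting maps
  let g : (ι → (𝒜 0)) →ₗ[(𝒜 0)] M :=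
    { toFun := fun c => ∑ p : ι, c p • xM p
      map_add' := fun c₁ c₂ => by
        simp [add_smul, Finset.sum_add_distrib]
      map_smul' := fun c₀ c => by
        simp only [Pi.smul_apply, smul_eq_mul, mul_smul, RingHom.id_apply]
        exact (Finset.smul_sum (r := c₀) (f := fun p => c p • xM p) (s := Finset.univ)).symm }
  have proj_lin : ∀ (c : (𝒜 0)) (r : R),
      (DirectSum.decompose 𝒜 ((c : R) * r) 0 : R)
        = (c : R) * (DirectSum.decompose 𝒜 r 0 : R) := by
    intro c r
    have := DirectSum.coe_decompose_mul_add_of_left_mem 𝒜 (i := 0) (j := 0) (b := r) c.2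
    simpa using this
  let f : M →ₗ[(𝒜 0)] (ι → (𝒜 0)) :=
    { toFun := fun m p => DirectSum.decompose 𝒜 ((m : R) * (y (p.1 : ℤ) p.2 : R)) 0
      map_add' := fun m₁ m₂ => by
        funext p
        simp [add_mul]
      map_smul' := fun c m => by
        funext p
        refine Subtype.ext ?_
        have hcoe : ((c • m : M) : R) = (c : R) * (m : R) := rfl
        show (DirectSum.decompose 𝒜 (((c • m : M) : R) * _) 0 : R) = _
        rw [hcoe, mul_assoc, proj_lin]
        rfl }
  -- the key computation
  have main : ∀ r : R, r ∈ M →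
      ∑ p : ι, (DirectSum.decompose 𝒜 (r * (y (p.1 : ℤ) p.2 : R)) 0 : R) * (x (p.1 : ℤ) p.2 : R)
        = r := by
    intro r hr
    rw [hMdef, iSup_subtype'] at hr
    refine Submodule.iSup_induction (fun n : ↥(Set.Icc a b) => 𝒜 (n : ℤ))
      (motive := fun z => ∑ p : ι,
        (DirectSum.decompose 𝒜 (z * (y (p.1 : ℤ) p.2 : R)) 0 : R) * (x (p.1 : ℤ) p.2 : R) = z)
      hr ?_ ?_ ?_
    · intro n r hr
      rw [show (Finset.univ : Finset ι) = Finset.univ.sigma fun _ => Finset.univ from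
        (Finset.univ_sigma_univ).symm, Finset.sum_sigma]
      rw [Finset.sum_eq_single n]
      · have hmem : ∀ i, r * (y (n : ℤ) i : R) ∈ 𝒜 0 := fun i => by
          simpa using SetLike.mul_mem_graded hr (y (n : ℤ) i).2
        calc ∑ i : Fin (k (n : ℤ)),
              (DirectSum.decompose 𝒜 (r * (y (n : ℤ) i : R)) 0 : R) * (x (n : ℤ) i : R)
            = ∑ i : Fin (k (n : ℤ)), r * ((y (n : ℤ) i : R) * (x (n : ℤ) i : R)) := by
              refine Finset.sum_congr rfl fun i _ => ?_
              rw [DirectSum.decompose_of_mem_same 𝒜 (hmem i), mul_assoc]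
          _ = r := by rw [← Finset.mul_sum, hk, mul_one]
      · intro n' _ hn'
        refine Finset.sum_eq_zero fun i _ => ?_
        have hmem : r * (y (n' : ℤ) i : R) ∈ 𝒜 ((n : ℤ) + -(n' : ℤ)) :=
          SetLike.mul_mem_graded hr (y (n' : ℤ) i).2
        have hne : (n : ℤ) + -(n' : ℤ) ≠ 0 := by
          intro h0
          exact hn' (Subtype.ext (by linarith : (n' : ℤ) = (n : ℤ)))
        rw [DirectSum.decompose_of_mem_ne 𝒜 hmem hne, zero_mul]
      · intro hn
        exact absurd (Finset.mem_univ n) hn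
    · simp
    · intro s t hs ht
      simp only [add_mul, DirectSum.decompose_add, DirectSum.add_apply,
        Submodule.coe_add]
      rw [Finset.sum_add_distrib, hs, ht]
  -- assemble
  have hgf : g.comp f = LinearMap.id := by
    refine LinearMap.ext fun m => Subtype.ext ?_
    have hcoe : ((g (f m) : M) : R)
        = ∑ p : ι, ((f m p : R)) * (x (p.1 : ℤ) p.2 : R) := by
      show ((∑ p : ι, f m p • xM p : M) : R) = _
      rw [Submodule.coe_sum]
      rfl
    show ((g (f m) : M) : R) = (m : R)
    rw [hcoe]
    exact main (m : R) m.2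
  have hsurj : Function.Surjective g := fun m =>
    ⟨f m, by simpa using LinearMap.congr_fun hgf m⟩
  exact ⟨Module.Finite.of_surjective g hsurj, Module.Projective.of_split f g hgf⟩
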